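/- Let y, ε : ℤ → ℝ be any real sequences such that y_τ = φ_0(τ) + Σ_{m=1}^p φ_m(τ) y_{τ−m} + ε_τ for every τ ∈ ℤ. Then for every t ∈ ℤ and every integer N ≥ 1, y_t = ξ_{t,N} y_{t−N} + Σ_{m=1}^{p−1} Σ_{i=1}^{p−m} φ_{m+i}(t−N+i) ξ_{t,N−i} y_{t−N−m} + Σ_{r=0}^{N−1} ξ_{t,r} (φ_0(t−r) + ε_{t−r}). (General solution theorem: the general solution is the sum of the homogeneous solution, involving the p initial values y_{t−N},…,y_{t−N−p+1}, and the particular solution, involving the drifts and errors from time t−N+1 to t, with Hessenbergian coefficients ξ.) -/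

import Mathlib

open Finset

/-- The `k × k` solution matrix `Φ_{t,k}`: its (1-based) `(i,j)` entry is `-1` if `i = j-1`,
`φ_{1+i−j}(t−k+i)` if `0 ≤ i−j ≤ p−1`, and `0` otherwise. -/
noncomputable def PhiMat (p : ℕ) (φ : ℕ → ℤ → ℝ) (t : ℤ) (k : ℕ) :
    Matrix (Fin k) (Fin k) ℝ :=
  fun i j =>
    if (i : ℕ) + 1 = (j : ℕ) then -1
    else if (j : ℕ) ≤ (i : ℕ) ∧ (i : ℕ) - (j : ℕ) + 1 ≤ p then
      φ ((i : ℕ) - (j : ℕ) + 1) (t - (k : ℤ) + (i : ℕ) + 1)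
    else 0

/-- The Hessenbergian (Green function) `ξ_{t,k} = det Φ_{t,k}`, with the conventions
`ξ_{t,0} = 1` (empty determinant) and `ξ_{t,k} = 0` for `k < 0`. -/
noncomputable def xi (p : ℕ) (φ : ℕ → ℤ → ℝ) (t : ℤ) (k : ℤ) : ℝ :=
  if 0 ≤ k then (PhiMat p φ t k.toNat).det else 0

lemma xi_zero (p : ℕ) (φ : ℕ → ℤ → ℝ) (t : ℤ) : xi p φ t 0 = 1 := by
  simp [xi, Matrix.det_isEmpty]

lemma xi_neg (p : ℕ) (φ : ℕ → ℤ → ℝ) (t : ℤ) (k : ℤ) (h : k < 0) : xi p φ t k = 0 := by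
  simp [xi, not_le.mpr h]

lemma xi_natCast (p : ℕ) (φ : ℕ → ℤ → ℝ) (t : ℤ) (k : ℕ) :
    xi p φ t (k : ℤ) = (PhiMat p φ t k).det := by
  simp [xi]

lemma PhiMat_succ_succ (p : ℕ) (φ : ℕ → ℤ → ℝ) (t : ℤ) (n : ℕ) (r c : Fin n) :
    PhiMat p φ t (n + 1) r.succ c.succ = PhiMat p φ t n r c := by
  simp only [PhiMat, Fin.val_succ]
  have h1 : (r : ℕ) + 1 + 1 = (c : ℕ) + 1 ↔ (r : ℕ) + 1 = (c : ℕ) := by omega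
  have h2 : (c : ℕ) + 1 ≤ (r : ℕ) + 1 ↔ (c : ℕ) ≤ (r : ℕ) := by omega
  have h3 : (r : ℕ) + 1 - ((c : ℕ) + 1) = (r : ℕ) - (c : ℕ) := by omega
  have h4 : t - ((n : ℤ) + 1) + ((r : ℕ) + 1) + 1 = t - n + r + 1 := by ring
  rw [h3]
  simp only [h1, h2]
  push_cast
  rw [h4]

lemma minor_det (p : ℕ) (φ : ℕ → ℤ → ℝ) (t : ℤ) :
    ∀ (n : ℕ) (i : Fin (n + 1)),
      ((PhiMat p φ t (n + 1)).submatrix i.succAbove Fin.succ).det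
        = (-1) ^ (i : ℕ) * (PhiMat p φ t (n - (i : ℕ))).det := by
  intro n
  induction n with
  | zero =>
    intro i
    fin_cases i
    simp [Matrix.det_isEmpty]
  | succ n ih =>
    intro i
    induction i using Fin.cases with
    | zero =>
      have hsub : ((PhiMat p φ t (n + 1 + 1)).submatrix (0 : Fin (n+2)).succAbove Fin.succ)
          = PhiMat p φ t (n + 1) := by
        funext a b
        rw [Fin.succAbove_zero]
        exact PhiMat_succ_succ p φ t (n+1) a b
      rw [hsub]
      simp
      rfl
    | succ j =>
      set A := ((PhiMat p φ t (n + 1 + 1)).submatrix (Fin.succ j).succAbove Fin.succ) with hA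
      have hdet : A.det = ∑ c : Fin (n+1), (-1) ^ (c : ℕ) * A 0 c *
          (A.submatrix Fin.succ c.succAbove).det := Matrix.det_succ_row_zero A
      have hA0 : ∀ c : Fin (n+1), A 0 c = if (c : ℕ) = 0 then -1 else 0 := by
        intro c
        rw [hA]
        simp only [Matrix.submatrix_apply, Fin.succ_succAbove_zero]
        simp only [PhiMat, Fin.val_succ]
        split
        · next h => simp only [Fin.val_zero] at h; simp [show (c:ℕ) = 0 by omega]
        · next h =>
          simp only [Fin.val_zero] at h
          rw [if_neg (by simp), if_neg (by omega)]
      have hcollapse : A.det = -(A.submatrix Fin.succ (0 : Fin (n+1)).succAbove).det := by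
        rw [hdet, Fintype.sum_eq_single (0 : Fin (n+1))]
        · simp [hA0]
        · intro c hc
          rw [hA0]
          rw [if_neg (Fin.val_ne_zero_iff.mpr hc)]
          ring
      have hsub2 : (A.submatrix Fin.succ (0 : Fin (n+1)).succAbove)
          = (PhiMat p φ t (n + 1)).submatrix j.succAbove Fin.succ := by
        funext a b
        rw [hA]
        simp only [Matrix.submatrix_apply, Fin.succAbove_zero, Fin.succ_succAbove_succ]
        exact PhiMat_succ_succ p φ t (n+1) (j.succAbove a) b.succ
      rw [hcollapse, hsub2, ih j]
      have hnn : n + 1 - ((j.succ : Fin (n+2)) : ℕ) = n - (j : ℕ) := by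
        simp [Fin.val_succ]
      rw [hnn, show ((j.succ : Fin (n+2)) : ℕ) = (j : ℕ) + 1 from rfl]
      ring

lemma xi_rec (p : ℕ) (φ : ℕ → ℤ → ℝ) (t : ℤ) (n : ℕ) :
    xi p φ t ((n : ℤ) + 1) =
      ∑ i ∈ Icc 1 p, φ i (t - ((n : ℤ) + 1) + i) * xi p φ t ((n : ℤ) + 1 - i) := by
  set h : ℕ → ℝ := fun j =>
    (if j ≤ p then φ j (t - ((n : ℤ) + 1) + j) else 0) * xi p φ t ((n : ℤ) + 1 - j) with hh
  have key : xi p φ t ((n : ℤ) + 1) = ∑ i ∈ range (n + 1), h (i + 1) := by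
    have h1 : xi p φ t ((n : ℤ) + 1) = (PhiMat p φ t (n + 1)).det := by
      rw [show ((n : ℤ) + 1) = ((n + 1 : ℕ) : ℤ) by push_cast; ring, xi_natCast]
    rw [h1, Matrix.det_succ_column_zero]
    have : ∀ i : Fin (n + 1), (-1) ^ (i : ℕ) * (PhiMat p φ t (n+1)) i 0 *
        ((PhiMat p φ t (n+1)).submatrix i.succAbove Fin.succ).det = h ((i : ℕ) + 1) := by
      intro i
      rw [minor_det p φ t n i, hh]
      have hent : (PhiMat p φ t (n+1)) i 0 =
          if (i : ℕ) + 1 ≤ p then φ ((i : ℕ) + 1) (t - ((n : ℤ) + 1) + ((i : ℕ) + 1)) else 0 := by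
        simp only [PhiMat]
        rw [if_neg (by simp)]
        have : ((i : ℕ) - ((0 : Fin (n+1)) : ℕ) + 1) = (i : ℕ) + 1 := by simp
        rw [this]
        have harg : t - ((n + 1 : ℕ) : ℤ) + (i : ℕ) + 1 = t - ((n : ℤ) + 1) + ((i : ℕ) + 1) := by
          push_cast; ring
        rw [harg]
        simp
      have hxi : xi p φ t ((n : ℤ) + 1 - ((i : ℕ) + 1)) = (PhiMat p φ t (n - (i : ℕ))).det := by
        have hi : (i : ℕ) ≤ n := by omega
        rw [show (n : ℤ) + 1 - (((i : ℕ) : ℤ) + 1) = ((n - (i : ℕ) : ℕ) : ℤ) by omega]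
        exact xi_natCast p φ t _
      have h2 : ((-1 : ℝ)) ^ (i : ℕ) * ((-1 : ℝ)) ^ (i : ℕ) = 1 := by
        rw [← pow_add, ← two_mul, pow_mul]; norm_num
      rw [hent, mul_mul_mul_comm, h2, one_mul]
      simp only
      push_cast
      rw [hxi]
    rw [Finset.sum_congr rfl (fun i _ => this i), Fin.sum_univ_eq_sum_range (fun i => h (i + 1))]
  have hIcc : ∀ M : ℕ, ∑ i ∈ Icc 1 M, h i = ∑ i ∈ range M, h (i + 1) := by
    intro M
    rw [← Finset.Ico_add_one_right_eq_Icc, Finset.sum_Ico_eq_sum_range]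
    simp [add_comm]
  have hzero1 : ∀ j, n + 1 < j → h j = 0 := by
    intro j hj
    have : xi p φ t ((n : ℤ) + 1 - j) = 0 := xi_neg p φ t _ (by omega)
    rw [hh]; simp [this]
  have hzero2 : ∀ j, p < j → h j = 0 := by
    intro j hj
    rw [hh]; simp [Nat.not_le.mpr hj]
  have hext : ∑ i ∈ Icc 1 (n + 1), h i = ∑ i ∈ Icc 1 p, h i := by
    have e1 : ∑ i ∈ Icc 1 (n + 1), h i = ∑ i ∈ Icc 1 (max (n + 1) p), h i := by
      apply Finset.sum_subset
      · intro x hx; simp only [mem_Icc] at *; omega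
      · intro x hx hnx
        simp only [mem_Icc] at hx hnx
        exact hzero1 x (by omega)
    have e2 : ∑ i ∈ Icc 1 p, h i = ∑ i ∈ Icc 1 (max (n + 1) p), h i := by
      apply Finset.sum_subset
      · intro x hx; simp only [mem_Icc] at *; omega
      · intro x hx hnx
        simp only [mem_Icc] at hx hnx
        exact hzero2 x (by omega)
    rw [e1, e2]
  rw [key, ← hIcc, hext]
  apply Finset.sum_congr rfl
  intro j hj
  simp only [mem_Icc] at hj
  rw [hh]
  simp [hj.2]

section helpers
variable {M : Type*} [AddCommMonoid M]

lemma sum_Icc_one (f : ℕ → M) (b : ℕ) :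
    ∑ i ∈ Icc 1 b, f i = ∑ i ∈ range b, f (i + 1) := by
  rw [← Finset.Ico_add_one_right_eq_Icc, Finset.sum_Ico_eq_sum_range]
  simp [add_comm]

end helpers

lemma key_step (p : ℕ) (hp : 1 ≤ p) (φ : ℕ → ℤ → ℝ) (y : ℤ → ℝ) (t : ℤ) (n : ℕ) :
    xi p φ t ((n : ℤ) + 1) * y (t - ((n : ℤ) + 1))
      + ∑ m ∈ Icc 1 (p - 1), ∑ i ∈ Icc 1 (p - m),
          φ (m + i) (t - ((n : ℤ) + 1) + i) * xi p φ t ((n : ℤ) + 1 - i)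
            * y (t - ((n : ℤ) + 1) - m)
    = ∑ m ∈ Icc 1 p,
        (φ m (t - n) * xi p φ t n
          + ∑ i ∈ Icc 1 (p - m), φ (m + i) (t - n + i) * xi p φ t ((n : ℤ) - i))
          * y (t - n - m) := by
  obtain ⟨q, rfl⟩ : ∃ q, p = q + 1 := ⟨p - 1, by omega⟩
  set c : ℕ → ℝ := fun m =>
    φ m (t - n) * xi (q+1) φ t n
      + ∑ i ∈ Icc 1 (q + 1 - m), φ (m + i) (t - n + i) * xi (q+1) φ t ((n : ℤ) - i) with hc
  have hco : ∀ (a a' : ℕ) (z z' w w' : ℤ), a = a' → z = z' → w = w' →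
      φ a z * xi (q+1) φ t w = φ a' z' * xi (q+1) φ t w' := by
    rintro a a' z z' w w' rfl rfl rfl; rfl
  have k1 : xi (q+1) φ t ((n : ℤ) + 1) = c 1 := by
    have e1 : xi (q+1) φ t ((n : ℤ) + 1)
        = ∑ i ∈ range (q+1),
            φ (i+1) (t - ((n : ℤ) + 1) + (↑(i+1) : ℤ))
              * xi (q+1) φ t ((n : ℤ) + 1 - (↑(i+1) : ℤ)) := by
      rw [xi_rec]
      exact sum_Icc_one
        (fun i => φ i (t - ((n : ℤ) + 1) + i) * xi (q+1) φ t ((n : ℤ) + 1 - i)) (q+1)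
    rw [e1, Finset.sum_range_succ']
    have e2 : ∑ i ∈ Icc 1 (q + 1 - 1), φ (1 + i) (t - n + i) * xi (q+1) φ t ((n : ℤ) - i)
        = ∑ i ∈ range q,
            φ (1 + (i+1)) (t - n + (↑(i+1) : ℤ)) * xi (q+1) φ t ((n : ℤ) - (↑(i+1) : ℤ)) := by
      rw [show q + 1 - 1 = q from rfl]
      exact sum_Icc_one (fun i => φ (1 + i) (t - n + i) * xi (q+1) φ t ((n : ℤ) - i)) q
    rw [hc]; simp only; rw [e2, add_comm]
    congr 1
    · exact hco _ _ _ _ _ _ (by norm_num) (by push_cast; ring) (by push_cast; ring)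
    · exact Finset.sum_congr rfl fun i _ =>
        hco _ _ _ _ _ _ (by omega) (by push_cast; ring) (by push_cast; ring)
  have k2 : ∀ m ∈ Icc 1 q,
      ∑ i ∈ Icc 1 (q + 1 - m),
          φ (m + i) (t - ((n : ℤ) + 1) + i) * xi (q+1) φ t ((n : ℤ) + 1 - i)
            * y (t - ((n : ℤ) + 1) - m)
        = c (m + 1) * y (t - n - (↑(m+1) : ℤ)) := by
    intro m hm
    simp only [mem_Icc] at hm
    rw [← Finset.sum_mul]
    have harg : t - ((n : ℤ) + 1) - m = t - n - (↑(m+1) : ℤ) := by push_cast; ring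
    rw [harg]
    congr 1
    have e1 : ∑ i ∈ Icc 1 (q + 1 - m),
        φ (m + i) (t - ((n : ℤ) + 1) + i) * xi (q+1) φ t ((n : ℤ) + 1 - i)
        = ∑ i ∈ range (q - m + 1),
            φ (m + (i+1)) (t - ((n : ℤ) + 1) + (↑(i+1) : ℤ))
              * xi (q+1) φ t ((n : ℤ) + 1 - (↑(i+1) : ℤ)) := by
      rw [show q + 1 - m = q - m + 1 by omega] at *
      exact sum_Icc_one
        (fun i => φ (m + i) (t - ((n : ℤ) + 1) + i) * xi (q+1) φ t ((n : ℤ) + 1 - i)) (q - m + 1)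
    rw [e1, Finset.sum_range_succ']
    have e2 : ∑ i ∈ Icc 1 (q + 1 - (m + 1)),
        φ (m + 1 + i) (t - n + i) * xi (q+1) φ t ((n : ℤ) - i)
        = ∑ i ∈ range (q - m),
            φ (m + 1 + (i+1)) (t - n + (↑(i+1) : ℤ)) * xi (q+1) φ t ((n : ℤ) - (↑(i+1) : ℤ)) := by
      rw [show q + 1 - (m + 1) = q - m by omega]
      exact sum_Icc_one (fun i => φ (m + 1 + i) (t - n + i) * xi (q+1) φ t ((n : ℤ) - i)) (q - m)
    rw [hc]; simp only; rw [e2, add_comm]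
    congr 1
    · exact hco _ _ _ _ _ _ (by omega) (by push_cast; ring) (by push_cast; ring)
    · exact Finset.sum_congr rfl fun i _ =>
        hco _ _ _ _ _ _ (by omega) (by push_cast; ring) (by push_cast; ring)
  have lhs_eq : xi (q+1) φ t ((n : ℤ) + 1) * y (t - ((n : ℤ) + 1))
      + ∑ m ∈ Icc 1 (q + 1 - 1), ∑ i ∈ Icc 1 (q + 1 - m),
          φ (m + i) (t - ((n : ℤ) + 1) + i) * xi (q+1) φ t ((n : ℤ) + 1 - i)
            * y (t - ((n : ℤ) + 1) - m)
      = c 1 * y (t - n - (↑(1:ℕ) : ℤ))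
        + ∑ m ∈ Icc 1 q, c (m + 1) * y (t - n - (↑(m+1) : ℤ)) := by
    rw [k1]
    congr 1
    · congr 1; push_cast; ring
    · rw [show q + 1 - 1 = q from rfl]
      exact Finset.sum_congr rfl k2
  rw [lhs_eq]
  have rhs_eq : ∑ m ∈ Icc 1 (q + 1), c m * y (t - n - m)
      = c 1 * y (t - n - (↑(1:ℕ) : ℤ)) + ∑ m ∈ Icc 1 q, c (m + 1) * y (t - n - (↑(m+1) : ℤ)) := by
    have e1 : ∑ m ∈ Icc 1 (q + 1), c m * y (t - n - m)
        = ∑ m ∈ range (q + 1), c (m + 1) * y (t - n - (↑(m+1) : ℤ)) :=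
      sum_Icc_one (fun m => c m * y (t - n - m)) (q + 1)
    have e2 : ∑ m ∈ Icc 1 q, c (m + 1) * y (t - n - (↑(m+1) : ℤ))
        = ∑ m ∈ range q, c (m + 1 + 1) * y (t - n - (↑(m+1+1) : ℤ)) :=
      sum_Icc_one (fun m => c (m + 1) * y (t - n - (↑(m+1) : ℤ))) q
    rw [e1, Finset.sum_range_succ', e2, add_comm]
  rw [← rhs_eq]

lemma general_all (p : ℕ) (hp : 1 ≤ p) (φ : ℕ → ℤ → ℝ) (y ε : ℤ → ℝ)
    (hy : ∀ τ : ℤ, y τ = φ 0 τ + ∑ m ∈ Finset.Icc 1 p, φ m τ * y (τ - m) + ε τ)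
    (t : ℤ) : ∀ N : ℕ,
    y t = xi p φ t N * y (t - N)
      + ∑ m ∈ Finset.Icc 1 (p - 1), ∑ i ∈ Finset.Icc 1 (p - m),
          φ (m + i) (t - N + i) * xi p φ t ((N : ℤ) - i) * y (t - N - m)
      + ∑ r ∈ Finset.range N, xi p φ t r * (φ 0 (t - r) + ε (t - r)) := by
  intro N
  induction N with
  | zero =>
    have hmid : (∑ m ∈ Icc 1 (p - 1), ∑ i ∈ Icc 1 (p - m),
        φ (m + i) (t - ((0:ℕ):ℤ) + i) * xi p φ t (((0:ℕ):ℤ) - i) * y (t - ((0:ℕ):ℤ) - m)) = 0 :=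
      Finset.sum_eq_zero fun m hm => Finset.sum_eq_zero fun i hi => by
        simp only [mem_Icc] at hi
        rw [xi_neg p φ t _ (by push_cast; omega)]
        ring
    rw [hmid, add_zero]
    norm_num [xi_zero]
  | succ N ih =>
    rw [Finset.sum_range_succ]
    push_cast
    rw [key_step p hp φ y t N]
    rw [hy (t - (N:ℤ))] at ih
    have hXS : xi p φ t (N:ℤ) * (∑ m ∈ Icc 1 p, φ m (t - (N:ℤ)) * y (t - (N:ℤ) - m))
        = ∑ m ∈ Icc 1 p, (φ m (t - (N:ℤ)) * xi p φ t (N:ℤ)) * y (t - (N:ℤ) - m) := by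
      rw [Finset.mul_sum]; exact Finset.sum_congr rfl fun m _ => by ring
    have hMext : (∑ m ∈ Icc 1 (p-1), ∑ i ∈ Icc 1 (p-m),
          φ (m+i) (t - (N:ℤ) + i) * xi p φ t ((N:ℤ) - i) * y (t - (N:ℤ) - m))
        = ∑ m ∈ Icc 1 p, (∑ i ∈ Icc 1 (p-m),
            φ (m+i) (t - (N:ℤ) + i) * xi p φ t ((N:ℤ) - i)) * y (t - (N:ℤ) - m) := by
      rw [Finset.sum_congr rfl (fun m _ => (Finset.sum_mul _ _ _).symm)]
      exact Finset.sum_subset (Finset.Icc_subset_Icc_right (by omega)) (fun x hx hnx => by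
        simp only [mem_Icc] at hx hnx
        rw [show p - x = 0 by omega]
        simp)
    have hsplit : (∑ m ∈ Icc 1 p,
          (φ m (t - (N:ℤ)) * xi p φ t (N:ℤ)
            + ∑ i ∈ Icc 1 (p-m), φ (m+i) (t - (N:ℤ) + i) * xi p φ t ((N:ℤ) - i))
            * y (t - (N:ℤ) - m))
        = (∑ m ∈ Icc 1 p, (φ m (t - (N:ℤ)) * xi p φ t (N:ℤ)) * y (t - (N:ℤ) - m))
          + ∑ m ∈ Icc 1 p, (∑ i ∈ Icc 1 (p-m),
              φ (m+i) (t - (N:ℤ) + i) * xi p φ t ((N:ℤ) - i)) * y (t - (N:ℤ) - m) := by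
      rw [← Finset.sum_add_distrib]
      exact Finset.sum_congr rfl fun m _ => by ring
    rw [ih]
    linear_combination hXS + hMext - hsplit

theorem general_solution_theorem
    (p : ℕ) (hp : 1 ≤ p) (φ : ℕ → ℤ → ℝ) (y ε : ℤ → ℝ)
    (hy : ∀ τ : ℤ, y τ = φ 0 τ + ∑ m ∈ Finset.Icc 1 p, φ m τ * y (τ - m) + ε τ)
    (t : ℤ) (N : ℕ) (hN : 1 ≤ N) :
    y t = xi p φ t N * y (t - N)
      + ∑ m ∈ Finset.Icc 1 (p - 1), ∑ i ∈ Finset.Icc 1 (p - m),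
          φ (m + i) (t - N + i) * xi p φ t ((N : ℤ) - i) * y (t - N - m)
      + ∑ r ∈ Finset.range N, xi p φ t r * (φ 0 (t - r) + ε (t - r)) :=
  general_all p hp φ y ε hy t N
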